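/- For any two incomparable elements of a finite partial order there exist two linearizations differing only by swapping those elements at adjacent positions: let ≤ be a partial order on a finite set E and let x, y ∈ E be incomparable (x ≠ y, ¬(x ≤ y), ¬(y ≤ x)). Then there exist words u and v (lists over E) such that both u ++ [x, y] ++ v and u ++ [y, x] ++ v are linear extensions of ≤. -/

import Mathlib

/-- `L` is a linear extension of the partial order `≤` on the finite type `E`. -/
def IsLinExt {E : Type*} [PartialOrder E] (L : List E) : Prop :=
  L.Nodup ∧ (∀ x : E, x ∈ L) ∧
    ∀ a b : E, a ≤ b → a ≠ b → List.Sublist [a, b] L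

/-- `x` and `y` are incomparable under the partial order. -/
def Incomp {E : Type*} [PartialOrder E] (x y : E) : Prop :=
  x ≠ y ∧ ¬ x ≤ y ∧ ¬ y ≤ x

open List

private lemma sorted_pair_sublist {α : Type*} {r : α → α → Prop}
    (hanti : ∀ a b, r a b → r b a → a = b) :
    ∀ {L : List α}, L.Pairwise r → ∀ {a b : α}, a ∈ L → b ∈ L → r a b → a ≠ b →
      [a, b] <+ L := by
  intro L hL
  induction hL with
  | nil => intro a b ha _ _ _; simp at ha
  | @cons c t hc _ ih =>
    intro a b ha hb hab hne
    rcases List.mem_cons.mp ha with rfl | ha'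
    · rcases List.mem_cons.mp hb with rfl | hb'
      · exact absurd rfl hne
      · exact (List.singleton_sublist.mpr hb').cons₂ a
    · rcases List.mem_cons.mp hb with rfl | hb'
      · exact absurd (hanti _ _ hab (hc a ha')) hne
      · exact (ih ha' hb' hab hne).cons c

/-- Given the down-block `u` and up-block `v`, the assembled list is a linear
extension. -/
private lemma build {E : Type*} [Fintype E] [PartialOrder E] {x y : E}
    (hne : x ≠ y) (hnxy : ¬ x ≤ y) (hnyx : ¬ y ≤ x) {u v : List E}
    (hu_nodup : u.Nodup) (hv_nodup : v.Nodup)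
    (hu_mem : ∀ z, z ∈ u ↔ (z ≤ x ∨ z ≤ y) ∧ z ≠ x ∧ z ≠ y)
    (hv_mem : ∀ z, z ∈ v ↔ ¬ z ≤ x ∧ ¬ z ≤ y)
    (hu_sorted : ∀ a b : E, a ∈ u → b ∈ u → a ≤ b → a ≠ b → [a, b] <+ u)
    (hv_sorted : ∀ a b : E, a ∈ v → b ∈ v → a ≤ b → a ≠ b → [a, b] <+ v) :
    IsLinExt (u ++ [x, y] ++ v) := by
  have hxu : x ∉ u := fun h => ((hu_mem x).mp h).2.1 rfl
  have hyu : y ∉ u := fun h => ((hu_mem y).mp h).2.2 rfl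
  have hxv : x ∉ v := fun h => ((hv_mem x).mp h).1 le_rfl
  have hyv : y ∉ v := fun h => ((hv_mem y).mp h).2 le_rfl
  have hdisj : ∀ z, z ∈ u → z ∉ v := by
    intro z hz hz'
    rcases ((hu_mem z).mp hz).1 with h | h
    · exact ((hv_mem z).mp hz').1 h
    · exact ((hv_mem z).mp hz').2 h
  refine ⟨?_, ?_, ?_⟩
  · -- Nodup
    rw [List.nodup_append, List.nodup_append]
    refine ⟨⟨hu_nodup, by simp [hne], ?_⟩, hv_nodup, ?_⟩
    · intro a ha b hb hab; subst hab
      simp only [List.mem_cons, List.mem_singleton, List.not_mem_nil, or_false] at hb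
      rcases hb with rfl | rfl
      · exact hxu ha
      · exact hyu ha
    · intro a ha b hb hab; subst hab
      rcases List.mem_append.mp ha with ha' | ha'
      · exact hdisj a ha' hb
      · simp only [List.mem_cons, List.mem_singleton, List.not_mem_nil, or_false] at ha'
        rcases ha' with rfl | rfl
        · exact hxv hb
        · exact hyv hb
  · -- completeness
    intro z
    simp only [List.mem_append, List.mem_cons, List.mem_singleton, List.not_mem_nil, or_false]
    by_cases hzx : z = x
    · exact Or.inl (Or.inr (Or.inl hzx))
    by_cases hzy : z = y
    · exact Or.inl (Or.inr (Or.inr hzy))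
    by_cases hle : z ≤ x ∨ z ≤ y
    · exact Or.inl (Or.inl ((hu_mem z).mpr ⟨hle, hzx, hzy⟩))
    · push_neg at hle
      exact Or.inr ((hv_mem z).mpr hle)
  · -- order respecting
    intro a b hab hneab
    have hmid : ∀ c, c ∈ ([x, y] : List E) ++ v → [c] <+ [x, y] ++ v :=
      fun c hc => List.singleton_sublist.mpr hc
    have key : ∀ l₁ l₂ : List E, [a] <+ l₁ → [b] <+ l₂ → [a, b] <+ l₁ ++ l₂ := by
      intro l₁ l₂ h1 h2
      exact List.Sublist.append h1 h2
    rw [List.append_assoc]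
    -- case analysis on where a lives
    by_cases hau : a ∈ u
    · by_cases hbu : b ∈ u
      · exact (hu_sorted a b hau hbu hab hneab).trans (List.sublist_append_left u _)
      · -- b is in the middle or in v
        have hb : b ∈ ([x, y] : List E) ++ v := by
          by_cases hbx : b = x
          · simp [hbx]
          by_cases hby : b = y
          · simp [hby]
          · have : b ∈ v := by
              refine (hv_mem b).mpr ⟨?_, ?_⟩
              · intro h
                exact hbu ((hu_mem b).mpr ⟨Or.inl h, hbx, hby⟩)
              · intro h
                exact hbu ((hu_mem b).mpr ⟨Or.inr h, hbx, hby⟩)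
            simp [this]
        exact key u ([x, y] ++ v) (List.singleton_sublist.mpr hau)
          (List.singleton_sublist.mpr hb)
    · -- a not in u
      have hmem_mid : ∀ c : E, c = x ∨ c = y ∨ c ∈ v → [c] <+ ([x, y] ++ v : List E) := by
        intro c hc
        apply List.singleton_sublist.mpr
        simp only [List.mem_append, List.mem_cons, List.mem_singleton, List.not_mem_nil, or_false]
        tauto
      by_cases hax : a = x
      · subst hax
        have hbv : b ∈ v := by
          refine (hv_mem b).mpr ⟨?_, ?_⟩
          · intro h; exact hneab (le_antisymm hab h)
          · intro h; exact hnxy (hab.trans h)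
        have h1 : ([a] : List E) ++ [b] <+ [a, y] ++ v :=
          List.Sublist.append (by simp) (List.singleton_sublist.mpr hbv)
        exact h1.trans (List.sublist_append_right u _)
      by_cases hay : a = y
      · subst hay
        have hbv : b ∈ v := by
          refine (hv_mem b).mpr ⟨?_, ?_⟩
          · intro h; exact hnyx (hab.trans h)
          · intro h; exact hneab (le_antisymm hab h)
        have h1 : ([a] : List E) ++ [b] <+ [x, a] ++ v :=
          List.Sublist.append (by simp) (List.singleton_sublist.mpr hbv)
        exact h1.trans (List.sublist_append_right u _)
      · -- a ∈ v
        have hav : a ∈ v := by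
          refine (hv_mem a).mpr ⟨?_, ?_⟩
          · intro h; exact hau ((hu_mem a).mpr ⟨Or.inl h, hax, hay⟩)
          · intro h; exact hau ((hu_mem a).mpr ⟨Or.inr h, hax, hay⟩)
        obtain ⟨hna_x, hna_y⟩ := (hv_mem a).mp hav
        have hbv : b ∈ v := by
          refine (hv_mem b).mpr ⟨?_, ?_⟩
          · intro h; exact hna_x (hab.trans h)
          · intro h; exact hna_y (hab.trans h)
        have h1 : [a, b] <+ v := hv_sorted a b hav hbv hab hneab
        exact (h1.trans (List.sublist_append_right [x, y] v)).trans
          (List.sublist_append_right u _)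

/-- Any two incomparable elements of a finite partial order appear adjacently
(in either order) in a pair of linear extensions that differ only by swapping
them. -/
theorem incomparable_adjacent_linearizations {E : Type*} [Fintype E]
    [PartialOrder E] (x y : E) (hxy : Incomp x y) :
    ∃ u v : List E, IsLinExt (u ++ [x, y] ++ v) ∧ IsLinExt (u ++ [y, x] ++ v) := by
  classical
  obtain ⟨hne, hnxy, hnyx⟩ := hxy
  set r : E → E → Prop := fun a b => toLinearExtension a ≤ toLinearExtension b with hr
  haveI : DecidableRel r := Classical.decRel _
  haveI : IsTrans E r := ⟨fun a b c hab hbc => le_trans hab hbc⟩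
  haveI : IsAntisymm E r := ⟨fun a b hab hba =>
    (le_antisymm (a := toLinearExtension a) (b := toLinearExtension b) hab hba : a = b)⟩
  haveI : IsTotal E r := ⟨fun a b => le_total (toLinearExtension a) (toLinearExtension b)⟩
  have hanti : ∀ a b : E, r a b → r b a → a = b := fun a b hab hba =>
    (le_antisymm (a := toLinearExtension a) (b := toLinearExtension b) hab hba : a = b)
  have hmono : ∀ a b : E, a ≤ b → r a b := fun a b h => toLinearExtension.monotone h
  set D : Finset E := Finset.univ.filter (fun z : E => (z ≤ x ∨ z ≤ y) ∧ z ≠ x ∧ z ≠ y) with hD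
  set U : Finset E := Finset.univ.filter (fun z : E => ¬ z ≤ x ∧ ¬ z ≤ y) with hU
  refine ⟨D.sort r, U.sort r, ?_, ?_⟩
  · refine build hne hnxy hnyx (D.sort_nodup r) (U.sort_nodup r) ?_ ?_ ?_ ?_
    · intro z; rw [Finset.mem_sort, hD, Finset.mem_filter]; simp
    · intro z; rw [Finset.mem_sort, hU, Finset.mem_filter]; simp
    · intro a b ha hb hab hneab
      exact sorted_pair_sublist hanti (D.pairwise_sort r) ha hb (hmono a b hab) hneab
    · intro a b ha hb hab hneab
      exact sorted_pair_sublist hanti (U.pairwise_sort r) ha hb (hmono a b hab) hneab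
  · refine build hne.symm hnyx hnxy (D.sort_nodup r) (U.sort_nodup r) ?_ ?_ ?_ ?_
    · intro z; rw [Finset.mem_sort, hD, Finset.mem_filter]; simp; tauto
    · intro z; rw [Finset.mem_sort, hU, Finset.mem_filter]; simp; tauto
    · intro a b ha hb hab hneab
      exact sorted_pair_sublist hanti (D.pairwise_sort r) ha hb (hmono a b hab) hneab
    · intro a b ha hb hab hneab
      exact sorted_pair_sublist hanti (U.pairwise_sort r) ha hb (hmono a b hab) hneab
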